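/- Let F be a field, 1 ≤ k ≤ n−1, let G be a generator matrix of an [n,k] MDS code over F and H a corresponding parity-check matrix, and let 𝒯 be a family of subsets of the n coordinates. Then there exists a vector e ∈ F^n that is constant on every T ∈ 𝒯 (i.e., e(i) = e(j) for all i, j ∈ T) and satisfies G · diag(e) · Hᵀ ≠ 0, if and only if 𝒯 is disconnected, i.e., there exist nonempty disjoint sets T₁, T₂ covering all n coordinates such that every T ∈ 𝒯 is contained in T₁ or contained in T₂. (A vector e constant on every T ∈ 𝒯 makes the (rep, e)-retrieval scheme 𝒯-secure, and G · diag(e) · Hᵀ ≠ 0 means the scheme has positive retrieval rate.) -/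

import Mathlib

open Matrix Module

/-- If the dot product of `x` with `k` linearly independent columns of `G` vanishes,
then `x = 0`. -/
lemma aux_dot_zero {F : Type*} [Field F] {n k : ℕ}
    (G : Matrix (Fin k) (Fin n) F)
    (hMDS : ∀ s : Finset (Fin n), s.card = k →
      LinearIndependent F (fun j : s => G.transpose j.val))
    (x : Fin k → F) (S : Finset (Fin n)) (hS : S.card = k)
    (hx : ∀ j ∈ S, Matrix.vecMul x G j = 0) : x = 0 := by
  have hli := hMDS S hS
  have hspan : Submodule.span F (Set.range (fun j : S => G.transpose j.val)) = ⊤ := by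
    apply hli.span_eq_top_of_card_eq_finrank'
    simp [hS, Module.finrank_pi]
  have hall : ∀ w : Fin k → F, x ⬝ᵥ w = 0 := by
    intro w
    have hw : w ∈ Submodule.span F (Set.range fun j : S => G.transpose j.val) := by
      rw [hspan]; trivial
    induction hw using Submodule.span_induction with
    | mem w hw =>
      obtain ⟨j, rfl⟩ := hw
      have h := hx j j.2
      simpa [Matrix.vecMul, dotProduct, Matrix.transpose_apply] using h
    | zero => simp
    | add u v _ _ h1 h2 => simp [dotProduct_add, h1, h2]
    | smul c u _ h1 => simp [dotProduct_smul, h1]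
  funext a
  have := hall (Pi.single a 1)
  simpa [dotProduct_single] using this

/-- For an `[n,k]` MDS code with generator matrix `G` and parity-check
matrix `H`, there exists a vector `e` constant on every colluding set `T ∈ 𝒯` with
`G · diag(e) · Hᵀ ≠ 0` if and only if the collusion pattern `𝒯` is disconnected
(there exist nonempty disjoint sets `T₁, T₂` covering all coordinates such that every
`T ∈ 𝒯` is contained in `T₁` or in `T₂`). -/
theorem stmt_5 (F : Type*) [Field F] (n k : ℕ) (hk1 : 1 ≤ k) (hk2 : k ≤ n - 1)
    (G : Matrix (Fin k) (Fin n) F) (H : Matrix (Fin (n - k)) (Fin n) F)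
    (hMDS : ∀ s : Finset (Fin n), s.card = k →
      LinearIndependent F (fun j : s => G.transpose j.val))
    (hH : H.rank = n - k) (hGH : G * H.transpose = 0)
    (𝒯 : Set (Finset (Fin n))) :
    (∃ e : Fin n → F, (∀ T ∈ 𝒯, ∀ i ∈ T, ∀ j ∈ T, e i = e j) ∧
        G * Matrix.diagonal e * H.transpose ≠ 0) ↔
      (∃ T₁ T₂ : Finset (Fin n), T₁.Nonempty ∧ T₂.Nonempty ∧ Disjoint T₁ T₂ ∧
        T₁ ∪ T₂ = Finset.univ ∧ ∀ T ∈ 𝒯, T ⊆ T₁ ∨ T ⊆ T₂) := by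
  classical
  have hkn : k + 1 ≤ n := by omega
  constructor
  · rintro ⟨e, hconst, hne⟩
    have hnc : ∃ i j : Fin n, e i ≠ e j := by
      by_contra h
      push_neg at h
      apply hne
      have i0 : Fin n := ⟨0, by omega⟩
      have hG : G * Matrix.diagonal e = e i0 • G := by
        ext a j
        simp [Matrix.mul_diagonal, h j i0, mul_comm]
      rw [hG, Matrix.smul_mul, hGH, smul_zero]
    obtain ⟨i0, j0, hij⟩ := hnc
    refine ⟨Finset.univ.filter (fun i => e i = e i0),
            Finset.univ.filter (fun i => e i ≠ e i0), ⟨i0, by simp⟩, ⟨j0, by simp [Ne.symm hij]⟩,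
            ?_, ?_, ?_⟩
    · rw [Finset.disjoint_left]
      intro a ha ha'
      simp only [Finset.mem_filter] at ha ha'
      exact ha'.2 ha.2
    · ext j
      by_cases h : e j = e i0 <;> simp [h]
    · intro T hT
      by_cases hTempty : T = ∅
      · left; simp [hTempty]
      obtain ⟨t, ht⟩ := Finset.nonempty_of_ne_empty hTempty
      by_cases h : e t = e i0
      · left
        intro i hi
        simp only [Finset.mem_filter, Finset.mem_univ, true_and]
        rw [hconst T hT i hi t ht]; exact h
      · right
        intro i hi
        simp only [Finset.mem_filter, Finset.mem_univ, true_and]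
        rw [hconst T hT i hi t ht]; exact h
  · rintro ⟨T₁, T₂, hne1, hne2, hdisj, huniv, hsub⟩
    set e : Fin n → F := fun j => if j ∈ T₁ then 1 else 0 with he
    have hmem : ∀ j, j ∉ T₁ ↔ j ∈ T₂ := by
      intro j
      constructor
      · intro hj
        have h2 : j ∈ T₁ ∪ T₂ := huniv ▸ Finset.mem_univ j
        rcases Finset.mem_union.mp h2 with h | h
        · exact absurd h hj
        · exact h
      · intro hj hj1; exact (Finset.disjoint_left.mp hdisj hj1) hj
    refine ⟨e, ?_, ?_⟩
    · intro T hT i hi j hj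
      rcases hsub T hT with h | h
      · simp [he, h hi, h hj]
      · simp [he, (hmem i).mpr (h hi) ∘ id, (hmem j).mpr (h hj) ∘ id,
          Finset.disjoint_left.mp hdisj.symm (h hi), Finset.disjoint_left.mp hdisj.symm (h hj)]
    · intro h0
      -- basic counting facts
      have hcardT : T₁.card + T₂.card = n := by
        rw [← Finset.card_union_of_disjoint hdisj, huniv, Finset.card_univ, Fintype.card_fin]
      have hT1pos : 1 ≤ T₁.card := Finset.card_pos.mpr hne1
      have hT2pos : 1 ≤ T₂.card := Finset.card_pos.mpr hne2
      have hcompl1 : T₁ᶜ = T₂ := by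
        ext j; simp only [Finset.mem_compl]; exact hmem j
      have hcompl2 : T₂ᶜ = T₁ := by
        ext j
        simp only [Finset.mem_compl]
        constructor
        · intro hj
          by_contra hj1
          exact hj ((hmem j).mp hj1)
        · intro hj hj2; exact (Finset.disjoint_left.mp hdisj hj) hj2
      -- the linear map given by G
      set φ := G.vecMulLinear with hφdef
      have hφinj : Function.Injective φ := by
        rw [injective_iff_map_eq_zero]
        intro x hx
        obtain ⟨S, -, hScard⟩ := Finset.exists_subset_card_eq (s := (Finset.univ : Finset (Fin n))) (n := k)
          (by rw [Finset.card_univ, Fintype.card_fin]; omega)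
        exact aux_dot_zero G hMDS x S hScard (fun j _ => by
          have := congrFun hx j; simpa [hφdef] using this)
      set C := LinearMap.range φ with hC
      have hCrank : Module.finrank F C = k := by
        rw [LinearMap.finrank_range_of_inj hφinj, Module.finrank_pi, Fintype.card_fin]
      -- vectors orthogonal to rows of H
      have hHv : ∀ (M : Matrix (Fin k) (Fin n) F), M * H.transpose = 0 →
          ∀ x : Fin k → F, H *ᵥ Matrix.vecMul x M = 0 := by
        intro M hM x
        have hHM : H * M.transpose = 0 := by
          have h := congrArg Matrix.transpose hM
          simpa [Matrix.transpose_mul] using h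
        rw [← Matrix.mulVec_transpose, Matrix.mulVec_mulVec, hHM, Matrix.zero_mulVec]
      -- C is exactly the kernel of H
      have hCker : C = LinearMap.ker H.mulVecLin := by
        have hle : C ≤ LinearMap.ker H.mulVecLin := by
          rintro v ⟨x, rfl⟩
          rw [LinearMap.mem_ker]
          exact hHv G hGH x
        have h1 := LinearMap.finrank_range_add_finrank_ker H.mulVecLin
        have h2 : Module.finrank F (Fin n → F) = n := by
          rw [Module.finrank_pi, Fintype.card_fin]
        have h3 : Module.finrank F (LinearMap.range H.mulVecLin) = n - k := hH
        have h4 : Module.finrank F (LinearMap.ker H.mulVecLin) = k := by omega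
        exact Submodule.eq_of_le_of_finrank_le hle (by rw [h4, hCrank])
      -- the masked map
      set ψ := (G * Matrix.diagonal e).vecMulLinear with hψdef
      have hψ : ∀ (x : Fin k → F) (j : Fin n), ψ x j = e j * φ x j := by
        intro x j
        show Matrix.vecMul x (G * Matrix.diagonal e) j = _
        rw [← Matrix.vecMul_vecMul, Matrix.vecMul_diagonal]
        exact mul_comm _ _
      -- submodule of vectors supported on T
      set Z : Finset (Fin n) → Submodule F (Fin n → F) := fun T =>
        { carrier := {v | ∀ j, j ∉ T → v j = 0}
          add_mem' := fun {a b} ha hb j hj => by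
            simp only [Pi.add_apply, ha j hj, hb j hj, add_zero]
          zero_mem' := fun j _ => rfl
          smul_mem' := fun c v hv j hj => by
            simp only [Pi.smul_apply, hv j hj, smul_zero] } with hZdef
      have hZmem : ∀ (T : Finset (Fin n)) (v : Fin n → F),
          v ∈ Z T ↔ ∀ j, j ∉ T → v j = 0 := fun T v => Iff.rfl
      -- minimum distance property
      have hwt : ∀ v ∈ C, ∀ S : Finset (Fin n), k ≤ S.card → (∀ j ∈ S, v j = 0) → v = 0 := by
        rintro v ⟨x, rfl⟩ S hcard hv
        obtain ⟨S', hS'sub, hS'card⟩ := Finset.exists_subset_card_eq (s := S) (n := k) hcard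
        have hx0 : x = 0 := aux_dot_zero G hMDS x S' hS'card
          (fun j hj => by simpa [hφdef] using hv j (hS'sub hj))
        rw [hx0, map_zero]
      -- dimension bound for codewords supported on T
      have hVle : ∀ T B : Finset (Fin n), B ⊆ T → k ≤ (Tᶜ ∪ B).card →
          Module.finrank F ↥(C ⊓ Z T) ≤ B.card := by
        intro T B hBT hcard
        have hinj : Function.Injective
            ((LinearMap.funLeft F F (fun j : {j : Fin n // j ∈ B} => (j : Fin n))).comp
              (C ⊓ Z T).subtype) := by
          rw [← LinearMap.ker_eq_bot, LinearMap.ker_eq_bot']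
          rintro ⟨v, hv⟩ hv0
          obtain ⟨hvC, hvZ⟩ := Submodule.mem_inf.mp hv
          have hv0' : ∀ j ∈ B, v j = 0 := by
            intro j hj
            exact congrFun hv0 ⟨j, hj⟩
          apply Subtype.ext
          refine hwt v hvC (Tᶜ ∪ B) hcard ?_
          intro j hj
          rcases Finset.mem_union.mp hj with hj | hj
          · exact hvZ j (Finset.mem_compl.mp hj)
          · exact hv0' j hj
        calc Module.finrank F ↥(C ⊓ Z T)
            ≤ Module.finrank F ({j : Fin n // j ∈ B} → F) :=
              LinearMap.finrank_le_finrank_of_injective hinj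
          _ = B.card := by rw [Module.finrank_pi, Fintype.card_coe]
      -- range of ψ
      have hrange : LinearMap.range ψ = C ⊓ Z T₁ := by
        apply le_antisymm
        · rintro v ⟨x, rfl⟩
          refine Submodule.mem_inf.mpr ⟨?_, ?_⟩
          · rw [hCker, LinearMap.mem_ker]
            exact hHv (G * Matrix.diagonal e) h0 x
          · intro j hj
            rw [hψ x j]
            simp [he, hj]
        · rintro v hv
          obtain ⟨hvC, hvZ⟩ := Submodule.mem_inf.mp hv
          obtain ⟨x, rfl⟩ := hvC
          refine ⟨x, ?_⟩
          funext j
          rw [hψ x j]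
          by_cases hj : j ∈ T₁
          · simp [he, hj]
          · simp [he, hj, hvZ j hj]
      -- kernel of ψ
      have hkermap : (LinearMap.ker ψ).map φ = C ⊓ Z T₂ := by
        apply le_antisymm
        · rintro v ⟨x, hx, rfl⟩
          refine Submodule.mem_inf.mpr ⟨⟨x, rfl⟩, ?_⟩
          intro j hj
          have hj1 : j ∈ T₁ := by
            by_contra hj1
            exact hj ((hmem j).mp hj1)
          have hx0 : ψ x = 0 := hx
          have h := congrFun hx0 j
          rw [hψ x j] at h
          simpa [he, hj1] using h
        · rintro v hv
          obtain ⟨hvC, hvZ⟩ := Submodule.mem_inf.mp hv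
          obtain ⟨x, rfl⟩ := hvC
          refine ⟨x, ?_, rfl⟩
          show ψ x = 0
          funext j
          rw [hψ x j]
          by_cases hj : j ∈ T₁
          · have : φ x j = 0 := hvZ j (fun h => (Finset.disjoint_left.mp hdisj hj) h)
            simp [this]
          · simp [he, hj]
      have hkerdim : Module.finrank F (LinearMap.ker ψ) = Module.finrank F ↥(C ⊓ Z T₂) := by
        rw [← hkermap]
        exact (Submodule.equivMapOfInjective φ hφinj _).finrank_eq
      -- rank-nullity
      have hrn := LinearMap.finrank_range_add_finrank_ker ψ
      rw [hrange, hkerdim] at hrn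
      have hfk : Module.finrank F (Fin k → F) = k := by
        rw [Module.finrank_pi, Fintype.card_fin]
      rw [hfk] at hrn
      -- choose the test sets
      obtain ⟨B₁, hB₁sub, hB₁card⟩ := Finset.exists_subset_card_eq (s := T₁) (n := k - min k T₂.card)
        (by omega)
      obtain ⟨B₂, hB₂sub, hB₂card⟩ := Finset.exists_subset_card_eq (s := T₂) (n := k - min k T₁.card)
        (by omega)
      have hc1 : k ≤ (T₁ᶜ ∪ B₁).card := by
        rw [hcompl1, Finset.card_union_of_disjoint (hdisj.symm.mono_right hB₁sub), hB₁card]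
        omega
      have hc2 : k ≤ (T₂ᶜ ∪ B₂).card := by
        rw [hcompl2, Finset.card_union_of_disjoint (hdisj.mono_right hB₂sub), hB₂card]
        omega
      have f1 : Module.finrank F ↥(C ⊓ Z T₁) ≤ k - min k T₂.card := by
        rw [← hB₁card]; exact hVle T₁ B₁ hB₁sub hc1
      have f2 : Module.finrank F ↥(C ⊓ Z T₂) ≤ k - min k T₁.card := by
        rw [← hB₂card]; exact hVle T₂ B₂ hB₂sub hc2
      omega
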